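/- Let G be a unicyclic graph with girth g ≥ 5 and let r be the number of vertices of G with degree at most 2. Then the 2-leaky forcing number of G equals r. -/

import Mathlib

open SimpleGraph

namespace LF

variable {V : Type*}

/-- Vertices eventually forced blue, starting from `S`, with leak set `L`:
a blue vertex not in `L` whose every neighbor other than `w` is blue forces `w`. -/
inductive Forced (G : SimpleGraph V) (L S : Set V) : V → Prop
  | init (v : V) (hv : v ∈ S) : Forced G L S v
  | force (b w : V) (hb : Forced G L S b) (hbL : b ∉ L) (hadj : G.Adj b w)
      (hall : ∀ u, G.Adj b u → u ≠ w → Forced G L S u) : Forced G L S w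

/-- `S` is an ℓ-leaky forcing set of `G`. -/
def IsLeakyForcingSet (G : SimpleGraph V) (ℓ : ℕ) (S : Set V) : Prop :=
  ∀ L : Set V, L.ncard ≤ ℓ → ∀ v, Forced G L S v

/-- The ℓ-leaky forcing number `Z_{(ℓ)}(G)`. -/
noncomputable def leakyForcingNumber (G : SimpleGraph V) [Fintype V] (ℓ : ℕ) : ℕ :=
  sInf {k | ∃ S : Finset V, S.card = k ∧ IsLeakyForcingSet G ℓ ↑S}

/-- An ℓ-leaky fort: a nonempty set `F` such that at most ℓ vertices outside `F`
have exactly one neighbor in `F`. -/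
def IsLeakyFort (G : SimpleGraph V) (ℓ : ℕ) (F : Set V) : Prop :=
  F.Nonempty ∧ {v | v ∉ F ∧ ∃! u, u ∈ F ∧ G.Adj v u}.ncard ≤ ℓ

/-- The path graph on `n` vertices. -/
def pathGraph (n : ℕ) : SimpleGraph (Fin n) :=
  SimpleGraph.fromRel (fun i j => i.val + 1 = j.val)

/-- The cycle graph on `n` vertices. -/
def cycleGraph (n : ℕ) : SimpleGraph (Fin n) :=
  SimpleGraph.fromRel (fun i j => (i.val + 1) % n = j.val)

/-- The star graph on `n` vertices, with center `0`. -/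
def starGraph (n : ℕ) : SimpleGraph (Fin n) :=
  SimpleGraph.fromRel (fun i _ => i.val = 0)

/-- The generalized Petersen graph `P(n,k)`: `Sum.inl i` is the inner vertex `x_{i+1}`,
`Sum.inr i` is the outer vertex `y_{i+1}` (0-indexed). -/
def petersen (n k : ℕ) : SimpleGraph (Fin n ⊕ Fin n) :=
  SimpleGraph.fromRel (fun a b =>
    match a, b with
    | Sum.inr i, Sum.inr j => (i.val + 1) % n = j.val
    | Sum.inl i, Sum.inr j => i = j
    | Sum.inl i, Sum.inl j => (i.val + k) % n = j.val
    | _, _ => False)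

end LF


section Aux
open Finset
variable {V : Type*} {G : SimpleGraph V}

/-- Reachability dichotomy after deleting one edge. -/
lemma reach_delete {K : SimpleGraph V} {a b : V} {x y : V}
    (h : K.Reachable x y) :
    (K.deleteEdges {s(a,b)}).Reachable x y ∨
    ((K.deleteEdges {s(a,b)}).Reachable x a ∧ (K.deleteEdges {s(a,b)}).Reachable y b) ∨
    ((K.deleteEdges {s(a,b)}).Reachable x b ∧ (K.deleteEdges {s(a,b)}).Reachable y a) := by
  set K' := K.deleteEdges {s(a,b)} with hK'
  obtain ⟨w⟩ := h
  induction w with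
  | nil => exact Or.inl (Reachable.refl _)
  | @cons x z y hxz p ih =>
    by_cases he : s(x,z) = s(a,b)
    · rw [Sym2.eq_iff] at he
      rcases he with ⟨rfl, rfl⟩ | ⟨rfl, rfl⟩
      · -- x = a, z = b
        rcases ih with h1 | ⟨h2a, h2b⟩ | ⟨h3a, h3b⟩
        · exact Or.inr (Or.inl ⟨Reachable.refl _, h1.symm⟩)
        · exact Or.inr (Or.inl ⟨Reachable.refl _, h2b⟩)
        · exact Or.inl (h3b.symm)
      · -- x = b, z = a
        rcases ih with h1 | ⟨h2a, h2b⟩ | ⟨h3a, h3b⟩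
        · exact Or.inr (Or.inr ⟨Reachable.refl _, h1.symm⟩)
        · exact Or.inl h2b.symm
        · exact Or.inr (Or.inr ⟨Reachable.refl _, h3b⟩)
    · have hadj : K'.Adj x z := by
        rw [hK', SimpleGraph.deleteEdges_adj]
        exact ⟨hxz, by simpa using he⟩
      rcases ih with h1 | ⟨h2a, h2b⟩ | ⟨h3a, h3b⟩
      · exact Or.inl (hadj.reachable.trans h1)
      · exact Or.inr (Or.inl ⟨hadj.reachable.trans h2a, h2b⟩)
      · exact Or.inr (Or.inr ⟨hadj.reachable.trans h3a, h3b⟩)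

lemma cc_delete_le [Finite V] (K : SimpleGraph V) (a b : V) :
    Nat.card (K.deleteEdges {s(a,b)}).ConnectedComponent ≤
      Nat.card K.ConnectedComponent + 1 := by
  classical
  set K' := K.deleteEdges {s(a,b)} with hK'
  have hle : K' ≤ K := by
    intro x y hxy; rw [hK', SimpleGraph.deleteEdges_adj] at hxy; exact hxy.1
  let φ : K' →g K := SimpleGraph.Hom.ofLE hle
  let f : K'.ConnectedComponent → Option K.ConnectedComponent := fun c =>
    if c = K'.connectedComponentMk b ∧ K'.connectedComponentMk a ≠ K'.connectedComponentMk b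
    then none else some (c.map φ)
  have hf : Function.Injective f := by
    intro c₁ c₂ hfc
    by_contra hne
    by_cases h1 : c₁ = K'.connectedComponentMk b ∧
        K'.connectedComponentMk a ≠ K'.connectedComponentMk b
    · by_cases h2 : c₂ = K'.connectedComponentMk b ∧
          K'.connectedComponentMk a ≠ K'.connectedComponentMk b
      · exact hne (h1.1.trans h2.1.symm)
      · simp only [f, if_pos h1, if_neg h2] at hfc; cases hfc
    · by_cases h2 : c₂ = K'.connectedComponentMk b ∧
          K'.connectedComponentMk a ≠ K'.connectedComponentMk b
      · simp only [f, if_neg h1, if_pos h2] at hfc; cases hfc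
      · simp only [f, if_neg h1, if_neg h2, Option.some.injEq] at hfc
        -- map c₁ = map c₂ in K
        obtain ⟨x, rfl⟩ := c₁.exists_rep
        obtain ⟨y, rfl⟩ := c₂.exists_rep
        have hmap : K.connectedComponentMk x = K.connectedComponentMk y := hfc
        have hreach : K.Reachable x y := ConnectedComponent.eq.mp hmap
        rcases reach_delete (a := a) (b := b) hreach with hr | ⟨hxa, hyb⟩ | ⟨hxb, hya⟩
        · exact hne (ConnectedComponent.sound hr)
        · -- c₂ = mk b; since ¬h2, mk a = mk b in K'
          have hc2 : K'.connectedComponentMk y = K'.connectedComponentMk b :=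
            ConnectedComponent.sound hyb
          have hab : K'.connectedComponentMk a = K'.connectedComponentMk b := by
            by_contra hab; exact h2 ⟨hc2, hab⟩
          have : K'.Reachable a b := ConnectedComponent.eq.mp hab
          exact hne (ConnectedComponent.sound (hxa.trans (this.trans hyb.symm)))
        · have hc1 : K'.connectedComponentMk x = K'.connectedComponentMk b :=
            ConnectedComponent.sound hxb
          have hab : K'.connectedComponentMk a = K'.connectedComponentMk b := by
            by_contra hab; exact h1 ⟨hc1, hab⟩
          have : K'.Reachable a b := ConnectedComponent.eq.mp hab
          exact hne (ConnectedComponent.sound (hxb.trans (this.symm.trans hya.symm)))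
  haveI : Finite K.ConnectedComponent :=
    Finite.of_surjective K.connectedComponentMk (fun c => c.exists_rep)
  haveI := Fintype.ofFinite K.ConnectedComponent
  calc Nat.card K'.ConnectedComponent ≤ Nat.card (Option K.ConnectedComponent) :=
        Nat.card_le_card_of_injective f hf
    _ = Nat.card K.ConnectedComponent + 1 := by
        simp [Nat.card_eq_fintype_card]

lemma card_le_edge_add_cc [Fintype V] (K : SimpleGraph V) :
    Fintype.card V ≤ K.edgeSet.ncard + Nat.card K.ConnectedComponent := by
  classical
  generalize hn : K.edgeSet.ncard = n
  induction n generalizing K with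
  | zero =>
    have hem : K.edgeSet = ∅ := (Set.ncard_eq_zero K.edgeSet.toFinite).mp hn
    have hbot : K = ⊥ := edgeSet_eq_empty.mp hem
    subst hbot
    have hinj : Function.Injective ((⊥ : SimpleGraph V).connectedComponentMk) := by
      intro x y hxy
      obtain ⟨w⟩ := ConnectedComponent.eq.mp hxy
      cases w with
      | nil => rfl
      | cons h p => exact absurd h (by simp)
    calc Fintype.card V = Nat.card V := (Nat.card_eq_fintype_card).symm
      _ ≤ Nat.card (⊥ : SimpleGraph V).ConnectedComponent :=
          Nat.card_le_card_of_injective _ hinj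
      _ ≤ 0 + Nat.card (⊥ : SimpleGraph V).ConnectedComponent := by omega
  | succ n ih =>
    have hne : K.edgeSet.Nonempty := by
      rw [← Set.ncard_pos K.edgeSet.toFinite]; omega
    obtain ⟨e, he⟩ := hne
    induction e using Sym2.ind with
    | _ a b =>
    set K' := K.deleteEdges {s(a,b)} with hK'
    have hcard : K'.edgeSet.ncard = n := by
      rw [hK', edgeSet_deleteEdges, Set.ncard_diff_singleton_of_mem he, hn]
      omega
    have h1 := ih K' hcard
    have h2 := cc_delete_le K a b
    rw [← hK'] at h2
    omega

lemma cc_le_cover [Fintype V] {G : SimpleGraph V} (hconn : G.Connected)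
    (s : Set (Sym2 V)) (U : Finset V) (hU : U.Nonempty)
    (hs : ∀ x y, s(x,y) ∈ s → x ∈ U) :
    Nat.card (G.deleteEdges s).ConnectedComponent ≤ U.card := by
  classical
  set K := G.deleteEdges s with hK
  obtain ⟨u₀, hu₀⟩ := hU
  have key : ∀ {x v : V}, G.Walk x v → (∃ u ∈ U, K.Reachable u x) →
      ∃ u ∈ U, K.Reachable u v := by
    intro x v w
    induction w with
    | nil => exact id
    | @cons x z v hadj p ih =>
      rintro ⟨u, hu, hr⟩
      by_cases hmem : s(x,z) ∈ s
      · refine ih ⟨z, hs z x (by rwa [Sym2.eq_swap]), Reachable.refl _⟩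
      · have : K.Adj x z := by rw [hK, SimpleGraph.deleteEdges_adj]; exact ⟨hadj, hmem⟩
        exact ih ⟨u, hu, hr.trans this.reachable⟩
  have hsurj : Function.Surjective (fun u : {x // x ∈ U} => K.connectedComponentMk u.1) := by
    intro c
    obtain ⟨v, rfl⟩ := c.exists_rep
    obtain ⟨u, hu, hr⟩ := key ((hconn.preconnected u₀ v).some) ⟨u₀, hu₀, Reachable.refl _⟩
    exact ⟨⟨u, hu⟩, ConnectedComponent.sound hr⟩
  calc Nat.card K.ConnectedComponent ≤ Nat.card {x // x ∈ U} :=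
        Nat.card_le_card_of_surjective _ hsurj
    _ = U.card := by simp [Nat.card_eq_fintype_card]

lemma girth_le_of_cycle {a : V} (w : G.Walk a a) (hw : w.IsCycle) :
    (G.girth : ℕ∞) ≤ w.length := by
  have h1 : G.egirth ≤ w.length := by
    refine le_trans ?_ (le_refl (w.length : ℕ∞))
    exact le_egirth.mp le_rfl a w hw
  have h2 : G.egirth ≠ ⊤ := by
    intro h; rw [h] at h1; exact (by simp : (⊤:ℕ∞) ≤ (w.length:ℕ∞) → False) h1
  rw [girth]
  rwa [ENat.coe_toNat h2]

lemma no_triangle (hg : (5 : ℕ∞) ≤ G.girth) {a b c : V}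
    (hab : G.Adj a b) (hbc : G.Adj b c) (hca : G.Adj c a) : False := by
  have hne1 := hab.ne
  have hne2 := hbc.ne
  have hne3 := hca.ne
  let w : G.Walk a a := .cons hab (.cons hbc (.cons hca .nil))
  have hcyc : w.IsCycle := by
    constructor
    · constructor
      · rw [Walk.isTrail_def]
        simp only [w, Walk.edges_cons, Walk.edges_nil, List.nodup_cons, List.mem_cons,
          List.mem_singleton, List.not_mem_nil, or_false, List.nodup_nil, and_true]
        rw [Sym2.eq_iff, Sym2.eq_iff, Sym2.eq_iff]
        tauto
      · simp [w]
    · simp only [w, Walk.support_cons, Walk.support_nil, List.tail_cons]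
      simp [List.nodup_cons, hne2, hne3.symm, fun h : b = a => hne1 h.symm]
      tauto
  have := girth_le_of_cycle w hcyc
  have hlen : w.length = 3 := by simp [w]
  rw [hlen] at this
  have : (5:ℕ∞) ≤ 3 := le_trans hg this
  norm_num at this

lemma no_square (hg : (5 : ℕ∞) ≤ G.girth) {a b c d : V}
    (hab : G.Adj a b) (hbc : G.Adj b c) (hcd : G.Adj c d) (hda : G.Adj d a)
    (hac : a ≠ c) (hbd : b ≠ d) : False := by
  have hne1 := hab.ne
  have hne2 := hbc.ne
  have hne3 := hcd.ne
  have hne4 := hda.ne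
  let w : G.Walk a a := .cons hab (.cons hbc (.cons hcd (.cons hda .nil)))
  have hcyc : w.IsCycle := by
    constructor
    · constructor
      · rw [Walk.isTrail_def]
        simp only [w, Walk.edges_cons, Walk.edges_nil, List.nodup_cons, List.mem_cons,
          List.mem_singleton, List.not_mem_nil, or_false, List.nodup_nil, and_true]
        rw [Sym2.eq_iff, Sym2.eq_iff, Sym2.eq_iff, Sym2.eq_iff, Sym2.eq_iff, Sym2.eq_iff]
        have := hne4.symm
        tauto
      · simp [w]
    · simp only [w, Walk.support_cons, Walk.support_nil, List.tail_cons]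
      simp [List.nodup_cons]
      have h1 : b ≠ a := fun h => hne1 h.symm
      have h2 : c ≠ a := fun h => hac h.symm
      have h3 : d ≠ a := hne4
      tauto
  have := girth_le_of_cycle w hcyc
  have hlen : w.length = 4 := by simp [w]
  rw [hlen] at this
  have : (5:ℕ∞) ≤ 4 := le_trans hg this
  norm_num at this

lemma fort_big [Fintype V] [DecidableEq V] (G : SimpleGraph V) [DecidableRel G.Adj]
    (hconn : G.Connected) (huni : G.edgeFinset.card = Fintype.card V)
    (hg : (5 : ℕ∞) ≤ G.girth)
    (W : Finset V) (hW : W.Nonempty) (hdeg : ∀ w ∈ W, 3 ≤ G.degree w) :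
    3 ≤ (univ.filter fun b => b ∉ W ∧ (W.filter (G.Adj b)).card = 1).card := by
  classical
  set B := univ.filter (fun b => b ∉ W ∧ (W.filter (G.Adj b)).card = 1) with hB
  rcases Nat.lt_or_ge W.card 3 with hsmall | hbig
  · -- |W| = 1 or 2
    interval_cases hc : W.card
    · exact absurd (card_eq_zero.mp hc ▸ hW) (by simp)
    · -- |W| = 1
      obtain ⟨w, rfl⟩ := card_eq_one.mp hc
      have hsub : G.neighborFinset w ⊆ B := by
        intro b hb
        rw [mem_neighborFinset] at hb
        rw [hB, mem_filter]
        refine ⟨mem_univ _, ?_, ?_⟩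
        · simp only [mem_singleton]; exact hb.ne'
        · rw [Finset.filter_singleton, if_pos hb.symm, card_singleton]
      calc 3 ≤ G.degree w := hdeg w (mem_singleton_self w)
        _ ≤ B.card := card_le_card hsub
    · -- |W| = 2
      obtain ⟨u, v, huv, rfl⟩ := card_eq_two.mp hc
      have hu : 3 ≤ G.degree u := hdeg u (by simp)
      have hv : 3 ≤ G.degree v := hdeg v (by simp)
      by_cases hadj : G.Adj u v
      · have hsub : (G.neighborFinset u).erase v ∪ (G.neighborFinset v).erase u ⊆ B := by
          intro b hb
          rw [mem_union] at hb
          rw [hB, mem_filter]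
          rcases hb with hb | hb
          · obtain ⟨hbv, hbu⟩ := mem_erase.mp hb
            rw [mem_neighborFinset] at hbu
            have hnbv : ¬ G.Adj b v := fun h => no_triangle hg hbu.symm hadj h.symm
            refine ⟨mem_univ _, ?_, ?_⟩
            · simp only [mem_insert, mem_singleton, not_or]; exact ⟨hbu.ne', hbv⟩
            · have : ({u, v} : Finset V).filter (G.Adj b) = {u} := by
                ext x
                simp only [mem_filter, mem_insert, mem_singleton]
                constructor
                · rintro ⟨rfl | rfl, hx⟩
                  · rfl
                  · exact absurd hx hnbv
                · rintro rfl; exact ⟨Or.inl rfl, hbu.symm⟩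
              rw [this, card_singleton]
          · obtain ⟨hbu, hbv⟩ := mem_erase.mp hb
            rw [mem_neighborFinset] at hbv
            have hnbu : ¬ G.Adj b u := fun h => no_triangle hg h hadj hbv
            refine ⟨mem_univ _, ?_, ?_⟩
            · simp only [mem_insert, mem_singleton, not_or]; exact ⟨hbu, hbv.ne'⟩
            · have : ({u, v} : Finset V).filter (G.Adj b) = {v} := by
                ext x
                simp only [mem_filter, mem_insert, mem_singleton]
                constructor
                · rintro ⟨rfl | rfl, hx⟩
                  · exact absurd hx hnbu
                  · rfl
                · rintro rfl; exact ⟨Or.inr rfl, hbv.symm⟩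
              rw [this, card_singleton]
        have hdisj : Disjoint ((G.neighborFinset u).erase v) ((G.neighborFinset v).erase u) := by
          rw [Finset.disjoint_left]
          intro b hb1 hb2
          obtain ⟨_, hbu⟩ := mem_erase.mp hb1
          obtain ⟨_, hbv⟩ := mem_erase.mp hb2
          rw [mem_neighborFinset] at hbu hbv
          exact no_triangle hg hadj hbv hbu.symm
        have h1 : 2 ≤ ((G.neighborFinset u).erase v).card := by
          rw [card_erase_of_mem (by rwa [mem_neighborFinset])]
          have := G.card_neighborFinset_eq_degree u
          omega
        have h2 : 2 ≤ ((G.neighborFinset v).erase u).card := by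
          rw [card_erase_of_mem (by rw [mem_neighborFinset]; exact hadj.symm)]
          have := G.card_neighborFinset_eq_degree v
          omega
        calc 3 ≤ ((G.neighborFinset u).erase v ∪ (G.neighborFinset v).erase u).card := by
              rw [card_union_of_disjoint hdisj]; omega
          _ ≤ B.card := card_le_card hsub
      · -- u, v not adjacent
        have hcom : ((G.neighborFinset u) ∩ (G.neighborFinset v)).card ≤ 1 := by
          by_contra hcon
          obtain ⟨b, hb, b', hb', hbb'⟩ := one_lt_card.mp (not_le.mp hcon)
          rw [mem_inter, mem_neighborFinset, mem_neighborFinset] at hb hb'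
          exact no_square hg hb.1 hb.2.symm hb'.2 hb'.1.symm huv hbb'
        have hsub : (G.neighborFinset u \ G.neighborFinset v)
            ∪ (G.neighborFinset v \ G.neighborFinset u) ⊆ B := by
          intro b hb
          rw [mem_union] at hb
          rw [hB, mem_filter]
          rcases hb with hb | hb
          · obtain ⟨hbu, hbv⟩ := mem_sdiff.mp hb
            rw [mem_neighborFinset] at hbu
            rw [mem_neighborFinset] at hbv
            refine ⟨mem_univ _, ?_, ?_⟩
            · simp only [mem_insert, mem_singleton, not_or]
              exact ⟨hbu.ne', fun h => hadj (h ▸ hbu)⟩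
            · have : ({u, v} : Finset V).filter (G.Adj b) = {u} := by
                ext x
                simp only [mem_filter, mem_insert, mem_singleton]
                constructor
                · rintro ⟨rfl | rfl, hx⟩
                  · rfl
                  · exact absurd hx.symm hbv
                · rintro rfl; exact ⟨Or.inl rfl, hbu.symm⟩
              rw [this, card_singleton]
          · obtain ⟨hbv, hbu⟩ := mem_sdiff.mp hb
            rw [mem_neighborFinset] at hbv
            rw [mem_neighborFinset] at hbu
            refine ⟨mem_univ _, ?_, ?_⟩
            · simp only [mem_insert, mem_singleton, not_or]
              exact ⟨fun h => hadj (h ▸ hbv).symm, hbv.ne'⟩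
            · have : ({u, v} : Finset V).filter (G.Adj b) = {v} := by
                ext x
                simp only [mem_filter, mem_insert, mem_singleton]
                constructor
                · rintro ⟨rfl | rfl, hx⟩
                  · exact absurd hx.symm hbu
                  · rfl
                · rintro rfl; exact ⟨Or.inr rfl, hbv.symm⟩
              rw [this, card_singleton]
        have hdisj : Disjoint (G.neighborFinset u \ G.neighborFinset v)
            (G.neighborFinset v \ G.neighborFinset u) := by
          rw [Finset.disjoint_left]
          intro b hb1 hb2
          exact (mem_sdiff.mp hb2).2 (mem_sdiff.mp hb1).1
        have h1 : 2 ≤ (G.neighborFinset u \ G.neighborFinset v).card := by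
          have := Finset.card_sdiff_add_card_inter (G.neighborFinset u) (G.neighborFinset v)
          have := G.card_neighborFinset_eq_degree u
          omega
        have h2 : 2 ≤ (G.neighborFinset v \ G.neighborFinset u).card := by
          have := Finset.card_sdiff_add_card_inter (G.neighborFinset v) (G.neighborFinset u)
          have hci : (G.neighborFinset v ∩ G.neighborFinset u).card ≤ 1 := by
            rwa [Finset.inter_comm]
          have := G.card_neighborFinset_eq_degree v
          omega
        calc 3 ≤ ((G.neighborFinset u \ G.neighborFinset v)
              ∪ (G.neighborFinset v \ G.neighborFinset u)).card := by
              rw [card_union_of_disjoint hdisj]; omega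
          _ ≤ B.card := card_le_card hsub
  · -- |W| ≥ 3 : the global counting argument
    set M := univ.filter (fun b => b ∉ W ∧ 2 ≤ (W.filter (G.Adj b)).card) with hM
    set sF := G.edgeFinset.filter (fun e => ∃ v ∈ W, v ∈ e) with hsF
    set K := G.deleteEdges ↑sF with hKdef
    have hmemsF : ∀ x y : V, (s(x,y) ∈ sF) ↔ (G.Adj x y ∧ (x ∈ W ∨ y ∈ W)) := by
      intro x y
      rw [hsF, mem_filter, mem_edgeFinset, mem_edgeSet]
      constructor
      · rintro ⟨h, v, hvW, hv⟩
        rcases Sym2.mem_iff.mp hv with rfl | rfl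
        · exact ⟨h, Or.inl hvW⟩
        · exact ⟨h, Or.inr hvW⟩
      · rintro ⟨h, hxy | hxy⟩
        · exact ⟨h, x, hxy, Sym2.mem_iff.mpr (Or.inl rfl)⟩
        · exact ⟨h, y, hxy, Sym2.mem_iff.mpr (Or.inr rfl)⟩
    have hKadj : ∀ x y, K.Adj x y ↔ G.Adj x y ∧ x ∉ W ∧ y ∉ W := by
      intro x y
      rw [hKdef, SimpleGraph.deleteEdges_adj, Finset.mem_coe]
      constructor
      · rintro ⟨h, hmem⟩
        rw [hmemsF] at hmem
        push_neg at hmem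
        exact ⟨h, hmem h⟩
      · rintro ⟨h, hx, hy⟩
        rw [hmemsF]
        push_neg
        exact ⟨h, fun _ => ⟨hx, hy⟩⟩
    -- degree computations
    have hdegG : ∀ v, G.degree v
        = (W.filter (G.Adj v)).card + (Wᶜ.filter (G.Adj v)).card := by
      intro v
      rw [← G.card_neighborFinset_eq_degree v]
      have hun : W.filter (G.Adj v) ∪ Wᶜ.filter (G.Adj v) = G.neighborFinset v := by
        rw [← filter_union, union_compl]
        ext u
        simp [mem_neighborFinset]
      rw [← hun, card_union_of_disjoint (disjoint_filter_filter disjoint_compl_right)]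
    have hdegK0 : ∀ v ∈ W, K.degree v = 0 := by
      intro v hv
      rw [← K.card_neighborFinset_eq_degree v, card_eq_zero]
      ext u
      simp only [mem_neighborFinset, notMem_empty, iff_false]
      rw [hKadj]
      tauto
    have hdegK : ∀ v ∉ W, K.degree v = (Wᶜ.filter (G.Adj v)).card := by
      intro v hv
      rw [← K.card_neighborFinset_eq_degree v]
      congr 1
      ext u
      rw [mem_neighborFinset, hKadj, mem_filter, mem_compl]
      tauto
    -- edge counts
    have hedgesK : K.edgeFinset = G.edgeFinset \ sF := by
      ext e
      rw [mem_edgeFinset, mem_sdiff, mem_edgeFinset, hKdef, edgeSet_deleteEdges,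
        Set.mem_diff, Finset.mem_coe]
    have hcardK : K.edgeFinset.card + sF.card = Fintype.card V := by
      rw [hedgesK, card_sdiff_of_subset (filter_subset _ _),
        Nat.sub_add_cancel (card_le_card (filter_subset _ _)), huni]
    -- sum splitting
    have hsplitG : (∑ v ∈ W, G.degree v) + (∑ v ∈ Wᶜ, G.degree v)
        = 2 * Fintype.card V := by
      rw [Finset.sum_add_sum_compl, G.sum_degrees_eq_twice_card_edges, huni]
    have hsplitK : (∑ v ∈ Wᶜ, K.degree v) = 2 * K.edgeFinset.card := by
      have := K.sum_degrees_eq_twice_card_edges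
      rw [← Finset.sum_add_sum_compl W (fun v => K.degree v)] at this
      rw [Finset.sum_congr rfl hdegK0, Finset.sum_const, smul_eq_mul, mul_zero] at this
      omega
    have hGW : (∑ v ∈ W, G.degree v)
        = (∑ v ∈ W, (W.filter (G.Adj v)).card) + (∑ v ∈ W, (Wᶜ.filter (G.Adj v)).card) := by
      rw [← Finset.sum_add_distrib]
      exact Finset.sum_congr rfl fun v _ => hdegG v
    have hGWc : (∑ v ∈ Wᶜ, G.degree v)
        = (∑ v ∈ Wᶜ, (W.filter (G.Adj v)).card) + (∑ v ∈ Wᶜ, (Wᶜ.filter (G.Adj v)).card) := by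
      rw [← Finset.sum_add_distrib]
      exact Finset.sum_congr rfl fun v _ => hdegG v
    have hKWc : (∑ v ∈ Wᶜ, K.degree v) = (∑ v ∈ Wᶜ, (Wᶜ.filter (G.Adj v)).card) :=
      Finset.sum_congr rfl fun v hv => hdegK v (mem_compl.mp hv)
    -- lower bound on degree sum over W
    have hXY : 3 * W.card ≤ ∑ v ∈ W, G.degree v := by
      calc 3 * W.card = ∑ _v ∈ W, 3 := by rw [Finset.sum_const, smul_eq_mul, mul_comm]
        _ ≤ ∑ v ∈ W, G.degree v := Finset.sum_le_sum hdeg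
    -- lower bound on Y'
    have hBsub : B ⊆ Wᶜ := fun b hb => mem_compl.mpr (mem_filter.mp hb).2.1
    have hMsub : M ⊆ Wᶜ := fun b hb => mem_compl.mpr (mem_filter.mp hb).2.1
    have hdisjBM : Disjoint B M := by
      rw [Finset.disjoint_left]
      intro b hb1 hb2
      have h1 := (mem_filter.mp hb1).2.2
      have h2 := (mem_filter.mp hb2).2.2
      omega
    have hY' : B.card + 2 * M.card ≤ ∑ v ∈ Wᶜ, (W.filter (G.Adj v)).card := by
      calc B.card + 2 * M.card
          = (∑ _v ∈ B, 1) + (∑ _v ∈ M, 2) := by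
            rw [Finset.sum_const, Finset.sum_const, smul_eq_mul, smul_eq_mul]
            ring
        _ ≤ (∑ v ∈ B, (W.filter (G.Adj v)).card) + (∑ v ∈ M, (W.filter (G.Adj v)).card) := by
            gcongr with b hb b hb
            · exact le_of_eq (mem_filter.mp hb).2.2.symm
            · exact (mem_filter.mp hb).2.2
        _ = ∑ v ∈ B ∪ M, (W.filter (G.Adj v)).card := (Finset.sum_union hdisjBM).symm
        _ ≤ ∑ v ∈ Wᶜ, (W.filter (G.Adj v)).card :=
            Finset.sum_le_sum_of_subset (union_subset hBsub hMsub)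
    -- bound |sF| by components
    have hncard : K.edgeSet.ncard = K.edgeFinset.card := by
      rw [← Nat.card_coe_set_eq, Nat.card_eq_fintype_card, SimpleGraph.edgeFinset_card]
    have hccK : sF.card ≤ Nat.card K.ConnectedComponent := by
      have := card_le_edge_add_cc K
      rw [hncard] at this
      omega
    have hcover : Nat.card K.ConnectedComponent ≤ (W ∪ (B ∪ M)).card := by
      rw [hKdef]
      refine cc_le_cover hconn _ _ ⟨hW.choose, mem_union_left _ hW.choose_spec⟩ ?_
      intro x y hmem
      rw [Finset.mem_coe, hmemsF] at hmem
      obtain ⟨hxy, hor⟩ := hmem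
      by_cases hx : x ∈ W
      · exact mem_union_left _ hx
      · have hyW : y ∈ W := by tauto
        have hpos : 1 ≤ (W.filter (G.Adj x)).card := by
          refine card_pos.mpr ⟨y, ?_⟩
          rw [mem_filter]
          exact ⟨hyW, hxy⟩
        refine mem_union_right _ ?_
        rcases Nat.lt_or_ge (W.filter (G.Adj x)).card 2 with h2 | h2
        · exact mem_union_left _ (by rw [hB, mem_filter]; exact ⟨mem_univ _, hx, by omega⟩)
        · exact mem_union_right _ (by rw [hM, mem_filter]; exact ⟨mem_univ _, hx, h2⟩)
    have hsc : sF.card ≤ W.card + B.card + M.card := by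
      have h1 := card_union_le W (B ∪ M)
      have h2 := card_union_le B M
      omega
    omega

lemma lf_lower [Fintype V] [DecidableEq V] (G : SimpleGraph V) [DecidableRel G.Adj]
    (S : Finset V) (hS : LF.IsLeakyForcingSet G 2 ↑S) :
    (univ.filter fun v => G.degree v ≤ 2) ⊆ S := by
  intro v hv
  have hdeg : G.degree v ≤ 2 := (mem_filter.mp hv).2
  have hL : (↑(G.neighborFinset v) : Set V).ncard ≤ 2 := by
    rw [Set.ncard_coe_finset, G.card_neighborFinset_eq_degree v]
    exact hdeg
  have hforced := hS _ hL v
  have key : ∀ x, LF.Forced G (↑(G.neighborFinset v)) (↑S) x → x = v → v ∈ S := by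
    intro x hx
    induction hx with
    | init w hw => rintro rfl; exact hw
    | force b w hb hbL hadj hall ih =>
      rintro rfl
      exact absurd (by rw [Finset.mem_coe, mem_neighborFinset]; exact hadj.symm) hbL
  exact key v hforced rfl

lemma lf_upper [Fintype V] [DecidableEq V] (G : SimpleGraph V) [DecidableRel G.Adj]
    (hconn : G.Connected) (huni : G.edgeFinset.card = Fintype.card V)
    (hgirth : (5 : ℕ∞) ≤ G.girth) :
    LF.IsLeakyForcingSet G 2 ↑(univ.filter fun v => G.degree v ≤ 2) := by
  classical
  intro L hL v
  by_contra hv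
  set S : Finset V := univ.filter (fun v => G.degree v ≤ 2) with hS
  set W : Finset V := univ.filter (fun x => ¬ LF.Forced G L ↑S x) with hWdef
  have hvW : v ∈ W := by rw [hWdef, mem_filter]; exact ⟨mem_univ _, hv⟩
  have hdeg : ∀ w ∈ W, 3 ≤ G.degree w := by
    intro w hw
    have hnf : ¬ LF.Forced G L ↑S w := (mem_filter.mp hw).2
    by_contra hc
    exact hnf (LF.Forced.init w (by
      rw [Finset.mem_coe, hS, mem_filter]
      exact ⟨mem_univ _, by omega⟩))
  have h3 := fort_big G hconn huni hgirth W ⟨v, hvW⟩ hdeg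
  set B := univ.filter (fun b => b ∉ W ∧ (W.filter (G.Adj b)).card = 1) with hB
  have hLcard : L.toFinite.toFinset.card ≤ 2 := by
    rw [← Set.ncard_eq_toFinset_card _ L.toFinite]
    exact hL
  have hBL : (B \ L.toFinite.toFinset).Nonempty := by
    rw [← card_pos]
    have := Finset.le_card_sdiff L.toFinite.toFinset B
    omega
  obtain ⟨b, hb⟩ := hBL
  obtain ⟨hbB, hbL'⟩ := mem_sdiff.mp hb
  have hbL : b ∉ L := fun h => hbL' (L.toFinite.mem_toFinset.mpr h)
  obtain ⟨-, hbW, hcard1⟩ := mem_filter.mp hbB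
  have hbF : LF.Forced G L ↑S b := by
    by_contra hc
    exact hbW (by rw [hWdef, mem_filter]; exact ⟨mem_univ _, hc⟩)
  obtain ⟨w, hweq⟩ := card_eq_one.mp hcard1
  have hwmem : w ∈ W.filter (G.Adj b) := hweq ▸ mem_singleton_self w
  obtain ⟨hwW, hadjbw⟩ := mem_filter.mp hwmem
  have hall : ∀ u, G.Adj b u → u ≠ w → LF.Forced G L ↑S u := by
    intro u hu hne
    by_contra hc
    have huW : u ∈ W := by rw [hWdef, mem_filter]; exact ⟨mem_univ _, hc⟩
    have : u ∈ W.filter (G.Adj b) := mem_filter.mpr ⟨huW, hu⟩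
    rw [hweq, mem_singleton] at this
    exact hne this
  exact (mem_filter.mp hwW).2 (LF.Forced.force b w hbF hbL hadjbw hall)

end Aux

theorem stmt9 {V : Type*} [Fintype V] [DecidableEq V] (G : SimpleGraph V) [DecidableRel G.Adj]
    (hconn : G.Connected) (huni : G.edgeFinset.card = Fintype.card V)
    (hgirth : (5 : ℕ∞) ≤ G.girth) :
    LF.leakyForcingNumber G 2 =
      (Finset.univ.filter fun v => G.degree v ≤ 2).card := by
  have hup := lf_upper G hconn huni hgirth
  have hmem : (Finset.univ.filter fun v => G.degree v ≤ 2).card ∈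
      {k | ∃ S : Finset V, S.card = k ∧ LF.IsLeakyForcingSet G 2 ↑S} :=
    ⟨_, rfl, hup⟩
  refine le_antisymm (Nat.sInf_le hmem) (le_csInf ⟨_, hmem⟩ ?_)
  rintro k ⟨S, rfl, hSf⟩
  exact Finset.card_le_card (lf_lower G S hSf)
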